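/- For every real number x ≥ 11, we have 1 - 1/x > sin²(7xπ/(16(x+1))). -/

import Mathlib

set_option linter.unusedSectionVars false

open Finset

namespace DistPaper

variable {V : Type*} [Fintype V] [DecidableEq V]

/-- The distance matrix of a graph: the `(u,v)` entry is the graph distance. -/
noncomputable def distMatrix (G : SimpleGraph V) : Matrix V V ℝ :=
  fun u v => (G.dist u v : ℝ)

lemma isHermitian_distMatrix (G : SimpleGraph V) : (distMatrix G).IsHermitian := by
  ext u v
  simp [distMatrix, Matrix.conjTranspose_apply, SimpleGraph.dist_comm]

/-- The `k`-th largest eigenvalue (1-indexed, so `k = 1` is the largest) of the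
distance matrix of `G`; junk value `0` if `k - 1 ≥ |V|`. -/
noncomputable def distEig (G : SimpleGraph V) (k : ℕ) : ℝ :=
  if h : k - 1 < Fintype.card V then
    ((isHermitian_distMatrix G).eigenvalues ∘ (Fintype.equivFin V).symm)
      (Tuple.sort ((isHermitian_distMatrix G).eigenvalues ∘ (Fintype.equivFin V).symm)
        (Fin.rev ⟨k - 1, h⟩))
  else 0

/-- The transmission of a vertex: the sum of the distances to all other vertices. -/
noncomputable def transmission (G : SimpleGraph V) (v : V) : ℕ :=
  ∑ u, G.dist v u

/-- The remoteness of a graph: the maximum over all vertices of the average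
distance from that vertex to the others, `ρ = max_v Tr(v)/(n-1)`. -/
noncomputable def remoteness (G : SimpleGraph V) : ℝ :=
  ((univ.sup (transmission G) : ℕ) : ℝ) / ((Fintype.card V : ℝ) - 1)

/-- `G` is a complete multipartite graph: vertices can be classified so that two
vertices are adjacent iff they lie in different classes. -/
def IsCompleteMultipartite (G : SimpleGraph V) : Prop :=
  ∃ f : V → V, ∀ u v, G.Adj u v ↔ f u ≠ f v

/-- The `k`-th largest eigenvalue (1-indexed) of the Laplacian matrix of `G`;
junk value `0` if `k - 1 ≥ |V|`. -/
noncomputable def lapEig (G : SimpleGraph V) (k : ℕ) : ℝ := by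
  classical
  exact if h : k - 1 < Fintype.card V then
    (((SimpleGraph.posSemidef_lapMatrix ℝ G).1).eigenvalues ∘ (Fintype.equivFin V).symm)
      (Tuple.sort ((((SimpleGraph.posSemidef_lapMatrix ℝ G)).1).eigenvalues ∘ (Fintype.equivFin V).symm)
        (Fin.rev ⟨k - 1, h⟩))
  else 0

/-- The Wiener index: the sum of distances over unordered pairs of vertices. -/
noncomputable def wienerIndex (G : SimpleGraph V) : ℝ :=
  (∑ u, ∑ v, (G.dist u v : ℝ)) / 2


set_option maxHeartbeats 1000000 in
/-- For every real `x ≥ 11`, `1 - 1/x > sin²(7xπ/(16(x+1)))`. -/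
theorem one_sub_inv_gt_sin_sq (x : ℝ) (hx : 11 ≤ x) :
    1 - 1 / x > Real.sin (7 * x * Real.pi / (16 * (x + 1))) ^ 2 := by
  have hπl : (3.14 : ℝ) < Real.pi := Real.pi_gt_d2
  have hπu : Real.pi < 3.15 := Real.pi_lt_d2
  have hx0 : (0:ℝ) < x := by linarith
  have hx1 : (0:ℝ) < x + 1 := by linarith
  have hx8 : (0:ℝ) < x + 8 := by linarith
  set ψ : ℝ := Real.pi * (x + 8) / (16 * (x + 1)) with hψ
  have hθ : 7 * x * Real.pi / (16 * (x + 1)) = Real.pi / 2 - ψ := by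
    rw [hψ]; field_simp; ring
  rw [hθ, Real.sin_pi_div_two_sub]
  have hpyth := Real.sin_sq_add_cos_sq ψ
  have hs : (x + 8) / (x + 1) ≤ 19 / 12 := by
    rw [div_le_div_iff₀ hx1 (by norm_num)]; linarith
  have hψpos : 0 < ψ := by rw [hψ]; positivity
  have hψle : ψ ≤ 1 := by
    rw [hψ, div_le_one (by positivity)]
    nlinarith
  have hsin : ψ - ψ ^ 3 / 4 < Real.sin ψ := by
    have := Real.sin_gt_sub_cube hψpos; linarith [pow_pos hψpos 3]
  set t : ℝ := 157 * (x + 8) / (800 * (x + 1)) with ht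
  have htpos : 0 < t := by rw [ht]; positivity
  have htle : t ≤ ψ := by
    rw [ht, hψ, div_le_div_iff₀ (by positivity) (by positivity)]
    nlinarith [mul_nonneg (mul_nonneg hx1.le hx8.le)
      (by linarith : (0:ℝ) ≤ 800 * Real.pi - 2512)]
  have htle1 : t ≤ 1 := le_trans htle hψle
  have hmono : t - t ^ 3 / 4 ≤ ψ - ψ ^ 3 / 4 := by
    nlinarith [mul_nonneg (sub_nonneg.2 htle)
      (by nlinarith : (0:ℝ) ≤ 4 - (ψ^2 + ψ*t + t^2))]
  have hc : t - t ^ 3 / 4 < Real.sin ψ := lt_of_le_of_lt hmono hsin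
  have hcpos : 0 < t - t ^ 3 / 4 := by nlinarith [mul_pos htpos htpos]
  have hsq : (t - t ^ 3 / 4) ^ 2 < Real.sin ψ ^ 2 := by nlinarith
  have e : (t - t ^ 3 / 4) ^ 2 =
      (4 * (157 * (x + 8)) * (800 * (x + 1)) ^ 2 - (157 * (x + 8)) ^ 3) ^ 2
        / (16 * (800 * (x + 1)) ^ 6) := by
    rw [ht]; field_simp; ring
  have hy : (0:ℝ) ≤ x - 11 := by linarith
  have hkey : 1 / x < (t - t ^ 3 / 4) ^ 2 := by
    rw [e, div_lt_div_iff₀ hx0 (by positivity), one_mul]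
    linarith [hy, pow_nonneg hy 2, pow_nonneg hy 3, pow_nonneg hy 4, pow_nonneg hy 5,
      pow_nonneg hy 6, pow_nonneg hy 7]
  nlinarith

end DistPaper
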